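/- Assume hypothesis (H): there exists ε > 0 such that t ↦ J_μ(t)/t is strictly decreasing on (0, ε). Then t ↦ J_μ(t)/t is strictly decreasing on all of (0,1); that is, for all 0 < u < v < 1, J_μ(u)/u > J_μ(v)/v. Consequently L_μ(x, y) > 0 for all 0 < x ≤ 1/2 and 0 < y ≤ min(2x, 1−x). -/

import Mathlib

open MeasureTheory Set Filter Topology
open scoped ENNReal

/-- The measure on `ℝ` with density `f` with respect to Lebesgue measure. -/
noncomputable def densMeasure (f : ℝ → ℝ) : Measure ℝ :=
  MeasureTheory.volume.withDensity (fun x => ENNReal.ofReal (f x))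

/-- The essential boundary of a set `Ω ⊆ ℝ`: points whose Lebesgue density in `Ω`
is neither `0` nor `1`. -/
def essBoundary (Ω : Set ℝ) : Set ℝ :=
  {x : ℝ |
    ¬ Tendsto (fun ρ : ℝ => (MeasureTheory.volume (Ω ∩ Ioo (x - ρ) (x + ρ))).toReal / (2 * ρ))
        (nhdsWithin 0 (Ioi 0)) (nhds 0) ∧
    ¬ Tendsto (fun ρ : ℝ => (MeasureTheory.volume (Ω ∩ Ioo (x - ρ) (x + ρ))).toReal / (2 * ρ))
        (nhdsWithin 0 (Ioi 0)) (nhds 1)}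

/-- The `μ`-perimeter of `Ω`: the integral of the density `f` over the essential boundary
of `Ω` with respect to the 0-dimensional Hausdorff (counting) measure. -/
noncomputable def perim (f : ℝ → ℝ) (Ω : Set ℝ) : ℝ≥0∞ :=
  ∫⁻ x in essBoundary Ω, ENNReal.ofReal (f x) ∂Measure.count

/-- The setup of the paper: an even, log-concave probability density `f` on `ℝ`,
positive exactly on the symmetric interval `(-b₀, b₀)` (with `b₀ ∈ (0, ∞]`),
together with the inverse `Finv` of the cumulative distribution function on `(0,1)`
and the isoperimetric function `J` given by `J r = f (Finv r)` on `(0,1)`,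
`J 0 = J 1 = 0`. -/
structure LogConcaveSetup where
  f : ℝ → ℝ
  b₀ : ℝ≥0∞
  hb₀ : 0 < b₀
  hf_meas : Measurable f
  hf_pos : ∀ x : ℝ, 0 < f x ↔ ENNReal.ofReal |x| < b₀
  hf_even : ∀ x : ℝ, f (-x) = f x
  hf_logConcave : ConcaveOn ℝ {x : ℝ | 0 < f x} (fun x => Real.log (f x))
  hprob : IsProbabilityMeasure (densMeasure f)
  Finv : ℝ → ℝ
  hFinv : ∀ r ∈ Ioo (0:ℝ) 1, (densMeasure f (Iic (Finv r))).toReal = r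
  J : ℝ → ℝ
  hJ : ∀ r ∈ Ioo (0:ℝ) 1, J r = f (Finv r)
  hJ0 : J 0 = 0
  hJ1 : J 1 = 0

/-- The asymmetry `λ(Ω)`: the minimum of the `μ`-measures of the symmetric differences
of `Ω` with the two half-lines of the same `μ`-measure as `Ω`. -/
noncomputable def asym (S : LogConcaveSetup) (Ω : Set ℝ) : ℝ :=
  min ((densMeasure S.f (symmDiff Ω (Iio (S.Finv ((densMeasure S.f Ω).toReal))))).toReal)
      ((densMeasure S.f (symmDiff Ω (Ioi (S.Finv (1 - (densMeasure S.f Ω).toReal))))).toReal)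

/-- The isoperimetric deficit function `K_μ`. -/
noncomputable def Kfun (J : ℝ → ℝ) (x y : ℝ) : ℝ :=
  if y ≤ x then J (x - y / 2) - J x + J (y / 2) else J (x + y / 2) - J x + J (y / 2)

/-- The convenient lower bound `L_μ` on the isoperimetric deficit function. -/
noncomputable def Lfun (J : ℝ → ℝ) (x y : ℝ) : ℝ :=
  if y ≤ x then J (y / 2) - (y / (2 * x)) * J x else J (y / 2) - (y / (2 * (1 - x))) * J x

namespace HypH

variable (S : LogConcaveSetup)

/-- CDF. -/
noncomputable def F (x : ℝ) : ℝ := (densMeasure S.f (Iic x)).toReal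

/-- support set -/
def D : Set ℝ := {x : ℝ | 0 < S.f x}

lemma meas_ne_top (s : Set ℝ) : densMeasure S.f s ≠ ⊤ := by
  haveI := S.hprob
  exact measure_ne_top _ s

lemma densMeasure_apply {s : Set ℝ} (hs : MeasurableSet s) :
    densMeasure S.f s = ∫⁻ x in s, ENNReal.ofReal (S.f x) := by
  simp [densMeasure, withDensity_apply _ hs]

lemma isOpen_D : IsOpen (D S) := by
  have : D S = (fun x : ℝ => ENNReal.ofReal |x|) ⁻¹' (Iio S.b₀) := by
    ext x; simp [D, S.hf_pos x]
  rw [this]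
  exact (isOpen_Iio).preimage (ENNReal.continuous_ofReal.comp continuous_abs)

lemma convex_D : Convex ℝ (D S) := by
  intro x hx y hy a b ha hb hab
  simp only [D, mem_setOf_eq, S.hf_pos] at hx hy ⊢
  have habs : |a • x + b • y| ≤ max |x| |y| := by
    calc |a • x + b • y| ≤ a * |x| + b * |y| := by
          simpa [abs_mul, abs_of_nonneg ha, abs_of_nonneg hb, smul_eq_mul] using
            abs_add_le (a * x) (b * y)
      _ ≤ a * max |x| |y| + b * max |x| |y| := by
          gcongr <;> simp [le_max_left, le_max_right]
      _ = max |x| |y| := by rw [← add_mul, hab, one_mul]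
  calc ENNReal.ofReal |a • x + b • y| ≤ ENNReal.ofReal (max |x| |y|) :=
        ENNReal.ofReal_le_ofReal habs
    _ < S.b₀ := by
        rcases max_cases |x| |y| with ⟨h, -⟩ | ⟨h, -⟩ <;> rw [h] <;> assumption

lemma ordConn_D : OrdConnected (D S) := (convex_D S).ordConnected

lemma ofReal_f_eq_zero {x : ℝ} (hx : x ∉ D S) : ENNReal.ofReal (S.f x) = 0 := by
  simp only [D, mem_setOf_eq, not_lt] at hx
  exact ENNReal.ofReal_eq_zero.2 hx

lemma F_mono : Monotone (F S) := by
  intro a b hab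
  exact ENNReal.toReal_mono (meas_ne_top S _) (measure_mono (Iic_subset_Iic.2 hab))

lemma F_add_Ioc {a b : ℝ} (hab : a ≤ b) :
    F S b = F S a + (densMeasure S.f (Ioc a b)).toReal := by
  have : Iic a ∪ Ioc a b = Iic b := Iic_union_Ioc_eq_Iic hab
  have hdisj : Disjoint (Iic a) (Ioc a b) := by
    simp [Set.disjoint_left]
    intro x hx1 hx2; linarith
  have := measure_union (μ := densMeasure S.f) hdisj measurableSet_Ioc
  rw [F, F, ← Iic_union_Ioc_eq_Iic hab, this,
    ENNReal.toReal_add (meas_ne_top S _) (meas_ne_top S _)]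

lemma F_Finv {r : ℝ} (hr : r ∈ Ioo (0:ℝ) 1) : F S (S.Finv r) = r := S.hFinv r hr

lemma Finv_mono {r r' : ℝ} (hr : r ∈ Ioo (0:ℝ) 1) (hr' : r' ∈ Ioo (0:ℝ) 1)
    (h : r ≤ r') : S.Finv r ≤ S.Finv r' := by
  by_contra hc
  push_neg at hc
  have := F_mono S hc.le
  rw [F_Finv S hr, F_Finv S hr'] at this
  rcases eq_or_lt_of_le h with rfl | h'
  · exact absurd rfl (ne_of_gt hc)
  · linarith

lemma Finv_mem_D {r : ℝ} (hr : r ∈ Ioo (0:ℝ) 1) : S.Finv r ∈ D S := by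
  by_contra hc
  have hb : S.b₀ ≤ ENNReal.ofReal |S.Finv r| := by
    simp only [D, mem_setOf_eq, S.hf_pos, not_lt] at hc; exact hc
  have hbt : S.b₀ ≠ ⊤ := by
    intro h; rw [h] at hb; exact (ENNReal.ofReal_lt_top).ne (top_le_iff.mp hb)
  set c : ℝ := S.b₀.toReal with hc'
  have hcabs : c ≤ |S.Finv r| := by
    have := ENNReal.toReal_mono ENNReal.ofReal_ne_top hb
    rwa [ENNReal.toReal_ofReal (abs_nonneg _)] at this
  have hc0 : 0 ≤ c := ENNReal.toReal_nonneg
  have hofc : ENNReal.ofReal c = S.b₀ := ENNReal.ofReal_toReal hbt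
  have key : ∀ y : ℝ, c ≤ |y| → ENNReal.ofReal (S.f y) = 0 := by
    intro y hy
    refine ofReal_f_eq_zero S ?_
    simp only [D, mem_setOf_eq, S.hf_pos, not_lt]
    rw [← hofc]
    exact ENNReal.ofReal_le_ofReal hy
  rcases abs_cases (S.Finv r) with ⟨he, -⟩ | ⟨he, -⟩
  · -- Finv r ≥ c ≥ 0 : F = 1
    rw [he] at hcabs
    have h1 : densMeasure S.f (Ioi (S.Finv r)) = 0 := by
      rw [densMeasure_apply S measurableSet_Ioi]
      rw [← lintegral_zero (μ := volume.restrict (Ioi (S.Finv r)))]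
      refine setLIntegral_congr_fun measurableSet_Ioi ?_
      intro y (hy : S.Finv r < y)
      exact key y (by rw [abs_of_nonneg (by nlinarith [hy.le] : (0:ℝ) ≤ y)]; linarith [hy.le])
    haveI := S.hprob
    have hIic1 : densMeasure S.f (Iic (S.Finv r)) = 1 := by
      have hcompl : Ioi (S.Finv r) = (Iic (S.Finv r))ᶜ := by simp
      have h5 := prob_compl_eq_one_sub (μ := densMeasure S.f) (measurableSet_Iic (a := S.Finv r))
      rw [← hcompl, h1] at h5
      exact le_antisymm prob_le_one (tsub_eq_zero_iff_le.mp h5.symm)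
    have h6 := S.hFinv r hr
    rw [hIic1] at h6
    simp at h6
    exact absurd h6.symm (ne_of_lt hr.2)
  · -- Finv r ≤ -c : F = 0
    rw [he] at hcabs
    have h0 : densMeasure S.f (Iic (S.Finv r)) = 0 := by
      rw [densMeasure_apply S measurableSet_Iic]
      rw [← lintegral_zero (μ := volume.restrict (Iic (S.Finv r)))]
      refine setLIntegral_congr_fun measurableSet_Iic ?_
      intro y hy
      refine key y ?_
      have hy' : y ≤ -c := le_trans hy (by linarith)
      rw [abs_of_nonpos (by linarith)]
      linarith
    have := S.hFinv r hr
    rw [h0] at this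
    simp at this
    exact absurd this.symm (ne_of_gt hr.1)

lemma f_Finv_pos {r : ℝ} (hr : r ∈ Ioo (0:ℝ) 1) : 0 < S.f (S.Finv r) := Finv_mem_D S hr

lemma J_pos {r : ℝ} (hr : r ∈ Ioo (0:ℝ) 1) : 0 < S.J r := by
  rw [S.hJ r hr]; exact f_Finv_pos S hr

lemma atom_zero (a : ℝ) : densMeasure S.f {a} = 0 := by
  rw [densMeasure_apply S (measurableSet_singleton a)]
  exact setLIntegral_measure_zero _ _ (by simp)

lemma F_neg (a : ℝ) : F S (-a) = 1 - F S a := by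
  haveI := S.hprob
  have hmap : densMeasure S.f (Iic (-a)) = densMeasure S.f (Ici a) := by
    rw [densMeasure_apply S measurableSet_Iic, densMeasure_apply S measurableSet_Ici]
    have h1 := (Measure.measurePreserving_neg (volume : Measure ℝ)).setLIntegral_comp_preimage
      (measurableSet_Iic (a := -a)) (S.hf_meas.ennreal_ofReal)
    have hpre : (Neg.neg : ℝ → ℝ) ⁻¹' (Iic (-a)) = Ici a := by
      ext x; simp
    rw [hpre] at h1
    rw [← h1]
    exact (setLIntegral_congr_fun measurableSet_Ici
      (fun x _ => by simp only [S.hf_even])).symm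
  have hIci : densMeasure S.f (Ici a) = densMeasure S.f (Ioi a) := by
    apply le_antisymm
    · calc densMeasure S.f (Ici a) ≤ densMeasure S.f ({a} ∪ Ioi a) := by
            apply measure_mono; intro z hz
            rcases eq_or_lt_of_le (mem_Ici.mp hz) with h | h
            · exact Or.inl (by simp [← h])
            · exact Or.inr h
        _ ≤ densMeasure S.f {a} + densMeasure S.f (Ioi a) := measure_union_le _ _
        _ = densMeasure S.f (Ioi a) := by rw [atom_zero S a, zero_add]
    · exact measure_mono (Ioi_subset_Ici le_rfl)
  have hcompl := prob_compl_eq_one_sub (μ := densMeasure S.f) (measurableSet_Iic (a := a))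
  rw [compl_Iic] at hcompl
  rw [F, F, hmap, hIci, hcompl, ENNReal.toReal_sub_of_le prob_le_one ENNReal.one_ne_top]
  simp

lemma F_strictMonoOn {x y : ℝ} (hx : x ∈ D S) (hy : y ∈ D S) (hxy : x < y) :
    F S x < F S y := by
  rw [F_add_Ioc S hxy.le]
  have hpos : 0 < densMeasure S.f (Ioc x y) := by
    rw [densMeasure_apply S measurableSet_Ioc]
    have hm : Measurable fun z => ENNReal.ofReal (S.f z) :=
      S.hf_meas.ennreal_ofReal
    rw [setLIntegral_pos_iff hm]
    have hsub : Ioo x y ⊆ Function.support (fun z => ENNReal.ofReal (S.f z)) ∩ Ioc x y := by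
      intro z hz
      constructor
      · have hzD : z ∈ D S := (ordConn_D S).out hx hy ⟨hz.1.le, hz.2.le⟩
        have : 0 < S.f z := hzD
        simp [Function.mem_support, ENNReal.ofReal_eq_zero, not_le, this]
      · exact ⟨hz.1, hz.2.le⟩
    calc (0:ℝ≥0∞) < volume (Ioo x y) := by
          rw [Real.volume_Ioo]; exact ENNReal.ofReal_pos.2 (by linarith)
      _ ≤ _ := measure_mono hsub
  have := ENNReal.toReal_pos hpos.ne' (meas_ne_top S _)
  linarith

lemma J_symm {r : ℝ} (hr : r ∈ Ioo (0:ℝ) 1) : S.J (1 - r) = S.J r := by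
  have hr' : (1 - r) ∈ Ioo (0:ℝ) 1 := ⟨by linarith [hr.2], by linarith [hr.1]⟩
  have hx := Finv_mem_D S hr
  have hz := Finv_mem_D S hr'
  have hnx : -S.Finv r ∈ D S := by
    simp only [D, mem_setOf_eq, S.hf_pos] at hx ⊢; rwa [abs_neg]
  have hFz : F S (S.Finv (1 - r)) = 1 - r := F_Finv S hr'
  have hFnx : F S (-S.Finv r) = 1 - r := by rw [F_neg, F_Finv S hr]
  have heq : S.Finv (1 - r) = -S.Finv r := by
    rcases lt_trichotomy (S.Finv (1 - r)) (-S.Finv r) with h | h | h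
    · have := F_strictMonoOn S hz hnx h; rw [hFz, hFnx] at this; linarith
    · exact h
    · have := F_strictMonoOn S hnx hz h; rw [hFz, hFnx] at this; linarith
  rw [S.hJ _ hr', S.hJ _ hr, heq, S.hf_even]

lemma logconc_key {s t h : ℝ} (hst : s ≤ t) (hh : 0 ≤ h) :
    ENNReal.ofReal (S.f (t + h)) * ENNReal.ofReal (S.f s) ≤
      ENNReal.ofReal (S.f (s + h)) * ENNReal.ofReal (S.f t) := by
  by_cases hs : s ∈ D S
  swap
  · rw [ofReal_f_eq_zero S hs, mul_zero]; exact zero_le'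
  by_cases hth : t + h ∈ D S
  swap
  · rw [ofReal_f_eq_zero S hth, zero_mul]; exact zero_le'
  have hseg : Icc s (t + h) ⊆ D S := (ordConn_D S).out hs hth
  have ht : t ∈ D S := hseg ⟨hst, by linarith⟩
  have hsh : s + h ∈ D S := hseg ⟨by linarith, by linarith⟩
  have hfs : 0 < S.f s := hs
  have hft : 0 < S.f t := ht
  have hfsh : 0 < S.f (s + h) := hsh
  have hfth : 0 < S.f (t + h) := hth
  rcases eq_or_lt_of_le (by linarith : s ≤ t + h) with heq | hlt
  · have h0 : h = 0 := by linarith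
    have hst' : s = t := by linarith
    rw [h0, add_zero, add_zero, hst', mul_comm]
  · set d := t + h - s with hd
    have hd0 : 0 < d := by rw [hd]; linarith
    set θ₁ := (t - s) / d with hθ₁def
    set θ₂ := h / d with hθ₂def
    have hθ₁ : 0 ≤ θ₁ := div_nonneg (by linarith) hd0.le
    have hθ₂ : 0 ≤ θ₂ := div_nonneg hh hd0.le
    have hsum : θ₂ + θ₁ = 1 := by
      rw [hθ₁def, hθ₂def, ← add_div, div_eq_one_iff_eq hd0.ne']
      rw [hd]; ring
    have hsum' : θ₁ + θ₂ = 1 := by linarith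
    have e1 : θ₂ • s + θ₁ • (t + h) = t := by
      simp only [smul_eq_mul, hθ₁def, hθ₂def]
      field_simp
      rw [hd]; ring
    have e2 : θ₁ • s + θ₂ • (t + h) = s + h := by
      simp only [smul_eq_mul, hθ₁def, hθ₂def]
      field_simp
      rw [hd]; ring
    have c1 := S.hf_logConcave.2 hs hth hθ₂ hθ₁ hsum
    have c2 := S.hf_logConcave.2 hs hth hθ₁ hθ₂ hsum'
    rw [e1] at c1
    rw [e2] at c2
    simp only [smul_eq_mul] at c1 c2
    have hlog : Real.log (S.f (t + h)) + Real.log (S.f s) ≤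
        Real.log (S.f (s + h)) + Real.log (S.f t) := by
      have hθ₂' : θ₂ = 1 - θ₁ := by linarith
      rw [hθ₂'] at c1 c2
      linarith [c1, c2]
    have key : S.f (t + h) * S.f s ≤ S.f (s + h) * S.f t := by
      have hexp := Real.exp_le_exp.2 hlog
      rwa [Real.exp_add, Real.exp_add, Real.exp_log hfth, Real.exp_log hfs,
        Real.exp_log hfsh, Real.exp_log hft] at hexp
    calc ENNReal.ofReal (S.f (t + h)) * ENNReal.ofReal (S.f s)
        = ENNReal.ofReal (S.f (t + h) * S.f s) := (ENNReal.ofReal_mul hfth.le).symm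
      _ ≤ ENNReal.ofReal (S.f (s + h) * S.f t) := ENNReal.ofReal_le_ofReal key
      _ = _ := ENNReal.ofReal_mul hfsh.le

lemma shift_lintegral (a b h : ℝ) :
    ∫⁻ s in Ioc a b, ENNReal.ofReal (S.f (s + h)) = densMeasure S.f (Ioc (a + h) (b + h)) := by
  rw [densMeasure_apply S measurableSet_Ioc]
  have hmp := measurePreserving_add_right (volume : Measure ℝ) h
  have h1 := hmp.setLIntegral_comp_preimage (measurableSet_Ioc (a := a + h) (b := b + h))
    (S.hf_meas.ennreal_ofReal)
  have hpre : (fun x : ℝ => x + h) ⁻¹' (Ioc (a + h) (b + h)) = Ioc a b := by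
    ext x
    simp only [mem_preimage, mem_Ioc]
    constructor
    · rintro ⟨h1, h2⟩; constructor <;> linarith
    · rintro ⟨h1, h2⟩; constructor <;> linarith
  rw [hpre] at h1
  exact h1

lemma Gconc {r1 r2 a b h : ℝ} (hr1 : r1 ∈ Ioo (0:ℝ) 1) (hr2 : r2 ∈ Ioo (0:ℝ) 1)
    (hle : r1 ≤ r2) (ha : 0 ≤ a) (hb : 0 ≤ b) (hab : a + b = 1) (hh : 0 ≤ h) :
    a * F S (S.Finv r1 + h) + b * F S (S.Finv r2 + h) ≤
      F S (S.Finv (a * r1 + b * r2) + h) := by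
  rcases eq_or_lt_of_le hle with rfl | hlt
  · have hcomb : a * r1 + b * r1 = r1 := by rw [← add_mul, hab, one_mul]
    rw [hcomb, ← add_mul, hab, one_mul]
  · have hd : 0 < r2 - r1 := by linarith
    set r := a * r1 + b * r2 with hrdef
    have e1 : r - r1 = b * (r2 - r1) := by rw [hrdef]; linear_combination r1 * hab
    have e2 : r2 - r = a * (r2 - r1) := by rw [hrdef]; linear_combination (-r2) * hab
    have hrl : r1 ≤ r := by linarith [e1, mul_nonneg hb hd.le]
    have hru : r ≤ r2 := by linarith [e2, mul_nonneg ha hd.le]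
    have hr : r ∈ Ioo (0:ℝ) 1 := ⟨lt_of_lt_of_le hr1.1 hrl, lt_of_le_of_lt hru hr2.2⟩
    set x1 := S.Finv r1 with hx1
    set x := S.Finv r with hx
    set x2 := S.Finv r2 with hx2
    have h1 : x1 ≤ x := Finv_mono S hr1 hr hrl
    have h2 : x ≤ x2 := Finv_mono S hr hr2 hru
    have core : densMeasure S.f (Ioc (x + h) (x2 + h)) * densMeasure S.f (Ioc x1 x) ≤
        densMeasure S.f (Ioc (x1 + h) (x + h)) * densMeasure S.f (Ioc x x2) := by
      rw [← shift_lintegral S x x2 h, ← shift_lintegral S x1 x h,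
        densMeasure_apply S (measurableSet_Ioc (a := x1) (b := x)),
        densMeasure_apply S (measurableSet_Ioc (a := x) (b := x2))]
      set g : ℝ → ℝ≥0∞ := fun y => ENNReal.ofReal (S.f (y + h)) with hg
      set w : ℝ → ℝ≥0∞ := fun y => ENNReal.ofReal (S.f y) with hw
      have hgm : Measurable g :=
        (S.hf_meas.comp (measurable_add_const h)).ennreal_ofReal
      have hwm : Measurable w := S.hf_meas.ennreal_ofReal
      calc (∫⁻ t in Ioc x x2, g t) * ∫⁻ s in Ioc x1 x, w s
          = ∫⁻ s in Ioc x1 x, (∫⁻ t in Ioc x x2, g t) * w s :=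
            (lintegral_const_mul _ hwm).symm
        _ ≤ ∫⁻ s in Ioc x1 x, g s * ∫⁻ t in Ioc x x2, w t := by
            refine setLIntegral_mono (hgm.mul_const _) fun s hs => ?_
            calc (∫⁻ t in Ioc x x2, g t) * w s
                = ∫⁻ t in Ioc x x2, g t * w s := (lintegral_mul_const _ hgm).symm
              _ ≤ ∫⁻ t in Ioc x x2, g s * w t := by
                  refine setLIntegral_mono (hwm.const_mul _) fun t ht => ?_
                  exact logconc_key S (le_trans hs.2 ht.1.le) hh
              _ = g s * ∫⁻ t in Ioc x x2, w t := lintegral_const_mul _ hwm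
        _ = (∫⁻ s in Ioc x1 x, g s) * ∫⁻ t in Ioc x x2, w t := lintegral_mul_const _ hgm
    have core' : (F S (x2 + h) - F S (x + h)) * (r - r1) ≤
        (F S (x + h) - F S (x1 + h)) * (r2 - r) := by
      have hfin1 : densMeasure S.f (Ioc (x + h) (x2 + h)) * densMeasure S.f (Ioc x1 x) ≠ ⊤ :=
        ENNReal.mul_ne_top (meas_ne_top S _) (meas_ne_top S _)
      have hfin2 : densMeasure S.f (Ioc (x1 + h) (x + h)) * densMeasure S.f (Ioc x x2) ≠ ⊤ :=
        ENNReal.mul_ne_top (meas_ne_top S _) (meas_ne_top S _)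
      have ht := ENNReal.toReal_mono hfin2 core
      rw [ENNReal.toReal_mul, ENNReal.toReal_mul] at ht
      have eB : (densMeasure S.f (Ioc (x + h) (x2 + h))).toReal = F S (x2 + h) - F S (x + h) := by
        have := F_add_Ioc S (by linarith : x + h ≤ x2 + h); linarith
      have eA : (densMeasure S.f (Ioc (x1 + h) (x + h))).toReal = F S (x + h) - F S (x1 + h) := by
        have := F_add_Ioc S (by linarith : x1 + h ≤ x + h); linarith
      have eP : (densMeasure S.f (Ioc x1 x)).toReal = r - r1 := by
        have := F_add_Ioc S h1
        rw [F_Finv S hr1, F_Finv S hr] at this; linarith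
      have eQ : (densMeasure S.f (Ioc x x2)).toReal = r2 - r := by
        have := F_add_Ioc S h2
        rw [F_Finv S hr, F_Finv S hr2] at this; linarith
      rw [eB, eA, eP, eQ] at ht
      exact ht
    have hPr : r - r1 = b * (r2 - r1) := by rw [hrdef]; linear_combination r1 * hab
    have hQr : r2 - r = a * (r2 - r1) := by rw [hrdef]; linear_combination (-r2) * hab
    rw [hPr, hQr] at core'
    have ht : (F S (x2 + h) - F S (x + h)) * b ≤ (F S (x + h) - F S (x1 + h)) * a := by
      by_contra hcon
      push_neg at hcon
      have hmul := mul_lt_mul_of_pos_right hcon hd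
      linarith [core', hmul]
    have hFB : F S (x + h) * a + F S (x + h) * b = F S (x + h) := by
      rw [← mul_add, hab, mul_one]
    linarith [ht, hFB]

lemma f_contOn : ContinuousOn S.f (D S) := by
  have hD : D S = {x : ℝ | 0 < S.f x} := rfl
  have hlog : ContinuousOn (fun x => Real.log (S.f x)) (D S) := by
    rw [hD]
    exact S.hf_logConcave.continuousOn (by rw [← hD]; exact isOpen_D S)
  have hexp : ContinuousOn (fun x => Real.exp (Real.log (S.f x))) (D S) :=
    Real.continuous_exp.comp_continuousOn hlog
  refine hexp.congr fun x hx => ?_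
  exact (Real.exp_log hx).symm

lemma deriv_limit {r : ℝ} (hr : r ∈ Ioo (0:ℝ) 1) :
    Tendsto (fun h => (F S (S.Finv r + h) - r) / h) (𝓝[>] (0:ℝ)) (𝓝 (S.J r)) := by
  set x := S.Finv r with hxdef
  have hxD : x ∈ D S := Finv_mem_D S hr
  have hfx : 0 < S.f x := hxD
  have hcont : ContinuousAt S.f x := (f_contOn S).continuousAt ((isOpen_D S).mem_nhds hxD)
  rw [S.hJ r hr, ← hxdef]
  rw [Metric.tendsto_nhdsWithin_nhds]
  intro ε hε
  obtain ⟨δ, hδ, hδ'⟩ := Metric.continuousAt_iff.mp hcont (ε/2) (by linarith)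
  refine ⟨δ, hδ, ?_⟩
  intro h hh hhd
  have hh0 : (0:ℝ) < h := hh
  have hhδ : h < δ := by rwa [Real.dist_eq, sub_zero, abs_of_pos hh0] at hhd
  have hFdiff : F S (x + h) - r = (densMeasure S.f (Ioc x (x + h))).toReal := by
    have := F_add_Ioc S (by linarith : x ≤ x + h)
    rw [F_Finv S hr] at this
    linarith
  have hbound : ∀ y ∈ Ioc x (x + h), |S.f y - S.f x| < ε/2 := by
    intro y hy
    apply hδ'
    rw [Real.dist_eq]
    have h1 : |y - x| ≤ h := by
      rw [abs_of_pos (by linarith [hy.1] : (0:ℝ) < y - x)]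
      linarith [hy.2]
    linarith
  have hub : densMeasure S.f (Ioc x (x + h)) ≤ ENNReal.ofReal (S.f x + ε/2) * ENNReal.ofReal h := by
    rw [densMeasure_apply S measurableSet_Ioc]
    calc ∫⁻ y in Ioc x (x + h), ENNReal.ofReal (S.f y)
        ≤ ∫⁻ _ in Ioc x (x + h), ENNReal.ofReal (S.f x + ε/2) :=
          setLIntegral_mono measurable_const fun y hy =>
            ENNReal.ofReal_le_ofReal (by linarith [(abs_lt.mp (hbound y hy)).2])
      _ = ENNReal.ofReal (S.f x + ε/2) * volume (Ioc x (x + h)) := by rw [setLIntegral_const]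
      _ = _ := by rw [Real.volume_Ioc]; congr 2; ring
  have hlb : ENNReal.ofReal (S.f x - ε/2) * ENNReal.ofReal h ≤ densMeasure S.f (Ioc x (x + h)) := by
    rw [densMeasure_apply S measurableSet_Ioc]
    calc ENNReal.ofReal (S.f x - ε/2) * ENNReal.ofReal h
        = ∫⁻ _ in Ioc x (x + h), ENNReal.ofReal (S.f x - ε/2) := by
          rw [setLIntegral_const, Real.volume_Ioc]; congr 2; ring
      _ ≤ ∫⁻ y in Ioc x (x + h), ENNReal.ofReal (S.f y) :=
          setLIntegral_mono (S.hf_meas.ennreal_ofReal) fun y hy =>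
            ENNReal.ofReal_le_ofReal (by linarith [(abs_lt.mp (hbound y hy)).1])
  have hubr : F S (x + h) - r ≤ (S.f x + ε/2) * h := by
    rw [hFdiff]
    calc (densMeasure S.f (Ioc x (x + h))).toReal
        ≤ (ENNReal.ofReal (S.f x + ε/2) * ENNReal.ofReal h).toReal :=
          ENNReal.toReal_mono (ENNReal.mul_ne_top ENNReal.ofReal_ne_top ENNReal.ofReal_ne_top) hub
      _ = (S.f x + ε/2) * h := by
          rw [ENNReal.toReal_mul, ENNReal.toReal_ofReal (by positivity),
            ENNReal.toReal_ofReal hh0.le]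
  have hlbr : (S.f x - ε/2) * h ≤ F S (x + h) - r := by
    rw [hFdiff]
    calc (S.f x - ε/2) * h ≤ (ENNReal.ofReal (S.f x - ε/2) * ENNReal.ofReal h).toReal := by
          rw [ENNReal.toReal_mul, ENNReal.toReal_ofReal hh0.le]
          rcases le_or_gt (S.f x - ε/2) 0 with hc | hc
          · have h1 : (S.f x - ε/2) * h ≤ 0 := mul_nonpos_iff.mpr (Or.inr ⟨hc, hh0.le⟩)
            have h2 : 0 ≤ (ENNReal.ofReal (S.f x - ε/2)).toReal * h :=
              mul_nonneg ENNReal.toReal_nonneg hh0.le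
            linarith
          · rw [ENNReal.toReal_ofReal hc.le]
      _ ≤ _ := ENNReal.toReal_mono (meas_ne_top S _) hlb
  rw [Real.dist_eq]
  have hL : S.f x - ε/2 ≤ (F S (x + h) - r) / h := (le_div_iff₀ hh0).2 (by linarith)
  have hU : (F S (x + h) - r) / h ≤ S.f x + ε/2 := (div_le_iff₀ hh0).2 (by linarith)
  rw [abs_lt]
  constructor <;> linarith

lemma J_concave {r1 r2 a b : ℝ} (hr1 : r1 ∈ Ioo (0:ℝ) 1) (hr2 : r2 ∈ Ioo (0:ℝ) 1)
    (ha : 0 ≤ a) (hb : 0 ≤ b) (hab : a + b = 1) :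
    a * S.J r1 + b * S.J r2 ≤ S.J (a * r1 + b * r2) := by
  have hr : a * r1 + b * r2 ∈ Ioo (0:ℝ) 1 := by
    have := (convex_Ioo (0:ℝ) 1) hr1 hr2 ha hb hab
    simpa using this
  have h1 := deriv_limit S hr1
  have h2 := deriv_limit S hr2
  have h3 := deriv_limit S hr
  have hev : ∀ᶠ h in 𝓝[>] (0:ℝ),
      a * ((F S (S.Finv r1 + h) - r1) / h) + b * ((F S (S.Finv r2 + h) - r2) / h) ≤
        (F S (S.Finv (a * r1 + b * r2) + h) - (a * r1 + b * r2)) / h := by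
    filter_upwards [self_mem_nhdsWithin] with h hh
    have hh0 : (0:ℝ) < h := hh
    have halg : a * ((F S (S.Finv r1 + h) - r1) / h) + b * ((F S (S.Finv r2 + h) - r2) / h)
        = (a * F S (S.Finv r1 + h) + b * F S (S.Finv r2 + h) - (a * r1 + b * r2)) / h := by
      field_simp
      ring
    rw [halg]
    rcases le_total r1 r2 with hle | hle
    · have hG := Gconc S hr1 hr2 hle ha hb hab hh0.le
      exact div_le_div_of_nonneg_right (by linarith) hh0.le
    · have hG := Gconc S hr2 hr1 hle hb ha (by linarith) hh0.le
      have hcomm : b * r2 + a * r1 = a * r1 + b * r2 := by ring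
      rw [hcomm] at hG
      exact div_le_div_of_nonneg_right (by linarith) hh0.le
  have hL : Tendsto (fun h => a * ((F S (S.Finv r1 + h) - r1) / h)
      + b * ((F S (S.Finv r2 + h) - r2) / h)) (𝓝[>] (0:ℝ))
      (𝓝 (a * S.J r1 + b * S.J r2)) := (h1.const_mul a).add (h2.const_mul b)
  exact le_of_tendsto_of_tendsto hL h3 hev

end HypH

/-- Under hypothesis (H) (`t ↦ J(t)/t` strictly decreasing near `0`), the function
`t ↦ J(t)/t` is strictly decreasing on all of `(0,1)`, and consequently
`L_μ(x, y) > 0` on the whole domain. -/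

theorem hypothesisH_global (S : LogConcaveSetup)
    (hH : ∃ ε > (0:ℝ), StrictAntiOn (fun t => S.J t / t) (Ioo (0:ℝ) ε)) :
    (∀ u v : ℝ, 0 < u → u < v → v < 1 → S.J v / v < S.J u / u) ∧
    (∀ x y : ℝ, 0 < x → x ≤ 1 / 2 → 0 < y → y ≤ min (2 * x) (1 - x) →
      0 < Lfun S.J x y) := by
  obtain ⟨ε, hε, hHs⟩ := hH
  have anti : ∀ u v : ℝ, 0 < u → u < v → v < 1 → (u / v) * S.J v ≤ S.J u := by
    intro u v hu huv hv
    have hvmem : v ∈ Ioo (0:ℝ) 1 := ⟨by linarith, hv⟩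
    have hev : ∀ᶠ w in 𝓝[>] (0:ℝ), ((u - w) / (v - w)) * S.J v ≤ S.J u := by
      filter_upwards [Ioo_mem_nhdsGT hu] with w hw
      have hvw : 0 < v - w := by linarith [hw.2]
      have hwmem : w ∈ Ioo (0:ℝ) 1 := ⟨hw.1, by linarith [hw.2]⟩
      have hsum : (v - u) / (v - w) + (u - w) / (v - w) = 1 := by
        rw [← add_div, div_eq_one_iff_eq hvw.ne']; ring
      have h1 := HypH.J_concave S hwmem hvmem (div_nonneg (by linarith) hvw.le)
        (div_nonneg (by linarith [hw.2]) hvw.le) hsum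
      have hcomb : ((v - u) / (v - w)) * w + ((u - w) / (v - w)) * v = u := by
        rw [div_mul_eq_mul_div, div_mul_eq_mul_div, ← add_div,
          div_eq_iff hvw.ne']; ring
      rw [hcomb] at h1
      have hJw : 0 ≤ ((v - u) / (v - w)) * S.J w :=
        mul_nonneg (div_nonneg (by linarith) hvw.le) (HypH.J_pos S hwmem).le
      linarith
    have hlim : Tendsto (fun w => ((u - w) / (v - w)) * S.J v) (𝓝[>] (0:ℝ))
        (𝓝 ((u / v) * S.J v)) := by
      have hv0 : v ≠ 0 := by intro h; rw [h] at hv; linarith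
      have hcont : ContinuousAt (fun w : ℝ => ((u - w) / (v - w)) * S.J v) 0 := by
        apply ContinuousAt.mul ?_ continuousAt_const
        apply ContinuousAt.div (continuousAt_const.sub continuousAt_id)
          (continuousAt_const.sub continuousAt_id)
        simpa using hv0
      have := hcont.tendsto
      simp only [sub_zero] at this
      exact this.mono_left nhdsWithin_le_nhds
    exact le_of_tendsto hlim hev
  have part1 : ∀ u v : ℝ, 0 < u → u < v → v < 1 → S.J v / v < S.J u / u := by
    intro u v hu huv hv
    have hv0 : 0 < v := by linarith
    have humem : u ∈ Ioo (0:ℝ) 1 := ⟨hu, by linarith⟩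
    have hvmem : v ∈ Ioo (0:ℝ) 1 := ⟨hv0, hv⟩
    have hle : S.J v / v ≤ S.J u / u := by
      have h := anti u v hu huv hv
      have h' : u * S.J v ≤ S.J u * v := by
        calc u * S.J v = (u / v) * S.J v * v := by field_simp
          _ ≤ S.J u * v := mul_le_mul_of_nonneg_right h hv0.le
      rw [div_le_div_iff₀ hv0 hu]
      linarith [h', mul_comm u (S.J v)]
    rcases lt_or_eq_of_le hle with hlt | heq
    · exact hlt
    · exfalso
      set c := S.J u / u with hc
      have hu0 : u ≠ 0 := hu.ne'
      have hv0' : v ≠ 0 := hv0.ne'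
      have hJu : S.J u = c * u := by rw [hc]; field_simp
      have hJv : S.J v = c * v := by
        have : S.J v / v = c := heq
        rw [← this]; field_simp
      have hline : ∀ s : ℝ, 0 < s → s < u → S.J s = c * s := by
        intro s hs hsu
        have hsmem : s ∈ Ioo (0:ℝ) 1 := ⟨hs, by linarith⟩
        have hvs : 0 < v - s := by linarith
        have hvu : 0 < v - u := by linarith
        have hsum : (v - u) / (v - s) + (u - s) / (v - s) = 1 := by
          rw [← add_div, div_eq_one_iff_eq hvs.ne']; ring
        have h1 := HypH.J_concave S hsmem hvmem
          (div_nonneg (by linarith) hvs.le) (div_nonneg (by linarith) hvs.le) hsum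
        have hcomb : ((v - u) / (v - s)) * s + ((u - s) / (v - s)) * v = u := by
          rw [div_mul_eq_mul_div, div_mul_eq_mul_div, ← add_div,
            div_eq_iff hvs.ne']; ring
        rw [hcomb] at h1
        have h3 : (v - u) * S.J s + (u - s) * S.J v ≤ S.J u * (v - s) := by
          have h2 := mul_le_mul_of_nonneg_right h1 hvs.le
          calc (v - u) * S.J s + (u - s) * S.J v
              = (((v - u) / (v - s)) * S.J s + ((u - s) / (v - s)) * S.J v) * (v - s) := by
                field_simp
            _ ≤ S.J u * (v - s) := h2
        have hupper : S.J s ≤ c * s := by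
          rw [hJu, hJv] at h3
          nlinarith [h3, hvu]
        have hlower : c * s ≤ S.J s := by
          have h4 := anti s v hs (by linarith) hv
          rw [hJv] at h4
          calc c * s = (s / v) * (c * v) := by field_simp
            _ ≤ S.J s := h4
        linarith
      set m := min ε u with hm
      have hm0 : 0 < m := lt_min hε hu
      have hmε : m ≤ ε := min_le_left ε u
      have hmu : m ≤ u := min_le_right ε u
      have e1 : S.J (m/3) = c * (m/3) := hline (m/3) (by positivity) (by linarith)
      have e2 : S.J (m/2) = c * (m/2) := hline (m/2) (by positivity) (by linarith)
      have hcon := hHs (⟨by positivity, by linarith⟩ : m/3 ∈ Ioo (0:ℝ) ε)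
        (⟨by positivity, by linarith⟩ : m/2 ∈ Ioo (0:ℝ) ε) (by linarith)
      simp only at hcon
      rw [e1, e2, mul_div_assoc, mul_div_assoc,
        div_self (by positivity : (m/2 : ℝ) ≠ 0),
        div_self (by positivity : (m/3 : ℝ) ≠ 0), mul_one] at hcon
      exact lt_irrefl _ hcon
  refine ⟨part1, ?_⟩
  intro x y hx hx2 hy hymin
  have hyx2 : y ≤ 2 * x := le_trans hymin (min_le_left _ _)
  have hy1x : y ≤ 1 - x := le_trans hymin (min_le_right _ _)
  have hx1 : x < 1 := by linarith
  have h1mx : 0 < 1 - x := by linarith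
  have hy2 : 0 < y / 2 := by linarith
  simp only [Lfun]
  rcases le_or_gt y x with hyx | hxy
  · rw [if_pos hyx]
    have h1 : S.J x / x < S.J (y/2) / (y/2) := part1 (y/2) x hy2 (by linarith) hx1
    rw [div_lt_div_iff₀ hx hy2] at h1
    have h2 : y / (2 * x) * S.J x = (S.J x * (y/2)) / x := by
      field_simp
    rw [h2, sub_pos, div_lt_iff₀ hx]
    linarith [h1]
  · rw [if_neg (not_le.2 hxy)]
    have hy2lt : y / 2 < 1 - x := by linarith
    have hsym : S.J x = S.J (1 - x) := (HypH.J_symm S ⟨hx, hx1⟩).symm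
    have h1 : S.J (1 - x) / (1 - x) < S.J (y/2) / (y/2) :=
      part1 (y/2) (1 - x) hy2 hy2lt (by linarith)
    rw [div_lt_div_iff₀ h1mx hy2] at h1
    have h2 : y / (2 * (1 - x)) * S.J (1 - x) = (S.J (1 - x) * (y/2)) / (1 - x) := by
      field_simp
    rw [hsym, h2, sub_pos, div_lt_iff₀ h1mx]
    linarith [h1]
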